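/- arXiv:2506.07508 — 2 statements merged into one kernel-verified Lean document; each statement's English description precedes it below -/
import Mathlib

section
/- Let (Y_n) be random variables, (a_n) ⊂ (0,1] with a_n ↓ 0 and a_n ln n → ∞. Set V_n := |Y_n|^{a_n} and assume there is a nonincreasing Ḡ : [0,∞) → [0,∞) with sup_n P(V_n > t) ≤ Ḡ(t) and ∫_0^∞ Ḡ(t) dt < ∞. Then almost surely ∑_{n=1}^∞ |Y_n| / n^{1/a_n} < ∞. -/
open MeasureTheory ProbabilityTheory Filter Topology Real

open Set ENNReal


lemma aux_tail_nat (k : ℕ) :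
    (∑' n : ℕ, if k < n then ENNReal.ofReal (((n : ℝ) ^ 2)⁻¹) else 0)
      ≤ ENNReal.ofReal (2 / (k + 1)) := by
  rw [ENNReal.tsum_eq_iSup_sum]
  refine iSup_le fun F => ?_
  set N := F.sup id + 1 with hN
  calc (∑ n ∈ F, if k < n then ENNReal.ofReal (((n : ℝ) ^ 2)⁻¹) else 0)
      = ENNReal.ofReal (∑ n ∈ F, if k < n then ((n : ℝ) ^ 2)⁻¹ else 0) := by
        rw [ENNReal.ofReal_sum_of_nonneg]
        · refine Finset.sum_congr rfl fun n _ => ?_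
          split <;> simp
        · intro n _
          split <;> positivity
    _ ≤ ENNReal.ofReal (2 / (k + 1)) := by
        apply ENNReal.ofReal_le_ofReal
        calc (∑ n ∈ F, if k < n then ((n : ℝ) ^ 2)⁻¹ else 0)
            = ∑ n ∈ F.filter (k < ·), ((n : ℝ) ^ 2)⁻¹ := by
              rw [Finset.sum_filter]
          _ ≤ ∑ n ∈ Finset.Ioo k N, ((n : ℝ) ^ 2)⁻¹ := by
              apply Finset.sum_le_sum_of_subset_of_nonneg
              · intro n hn
                simp only [Finset.mem_filter] at hn
                simp only [Finset.mem_Ioo]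
                exact ⟨hn.2, Nat.lt_succ_of_le (Finset.le_sup (f := id) hn.1)⟩
              · intro i _ _; positivity
          _ ≤ 2 / (k + 1) := sum_Ioo_inv_sq_le k N

lemma aux_tail_real (t : ℝ) (ht : 0 < t) :
    (∑' n : ℕ, if t < (n : ℝ) then ENNReal.ofReal (((n : ℝ) ^ 2)⁻¹) else 0)
      ≤ ENNReal.ofReal (2 / (⌊t⌋₊ + 1)) := by
  refine le_trans (ENNReal.tsum_le_tsum fun n => ?_) (aux_tail_nat ⌊t⌋₊)
  by_cases h : t < (n : ℝ)
  · rw [if_pos h, if_pos (by exact_mod_cast (Nat.floor_le ht.le).trans_lt h)]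
  · rw [if_neg h]; exact zero_le


lemma aux_G_fin (G : ℝ → ℝ) (hGint : IntegrableOn G (Set.Ioi 0)) :
    ∫⁻ t in Set.Ioi (0:ℝ), ENNReal.ofReal (G t) < ∞ :=
  lt_of_le_of_lt (lintegral_mono fun t => Real.ofReal_le_enorm (G t)) hGint.2

lemma aux_G_sum (G : ℝ → ℝ) (hGanti : AntitoneOn G (Set.Ici 0)) :
    (∑' n : ℕ, ENNReal.ofReal (G (n + 1)))
      ≤ ∫⁻ t in Set.Ioi (0:ℝ), ENNReal.ofReal (G t) := by
  have h1 : ∀ n : ℕ, ENNReal.ofReal (G (n + 1))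
      ≤ ∫⁻ t in Set.Ioc (n : ℝ) (n + 1), ENNReal.ofReal (G t) := by
    intro n
    have heq : ENNReal.ofReal (G (n + 1))
        = ∫⁻ _ in Set.Ioc (n : ℝ) (n + 1), ENNReal.ofReal (G ((n : ℝ) + 1)) := by
      rw [setLIntegral_const]
      simp [Real.volume_Ioc]
    rw [heq]
    refine lintegral_mono_ae ((ae_restrict_iff' measurableSet_Ioc).2 (ae_of_all _ ?_))
    intro t ht
    have ht0 : 0 ≤ t := le_trans (Nat.cast_nonneg n) ht.1.le
    exact ENNReal.ofReal_le_ofReal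
      (hGanti (Set.mem_Ici.2 ht0) (Set.mem_Ici.2 (by positivity)) ht.2)
  calc (∑' n : ℕ, ENNReal.ofReal (G (n + 1)))
      ≤ ∑' n : ℕ, ∫⁻ t in Set.Ioc (n : ℝ) (n + 1), ENNReal.ofReal (G t) :=
        ENNReal.tsum_le_tsum h1
    _ = ∫⁻ t in ⋃ n : ℕ, Set.Ioc (n : ℝ) (n + 1), ENNReal.ofReal (G t) := by
        rw [lintegral_iUnion (fun n => measurableSet_Ioc)]
        intro i j hij
        apply Set.Ioc_disjoint_Ioc.2
        rcases hij.lt_or_gt with h | h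
        · have : (i:ℝ) + 1 ≤ j := by exact_mod_cast h
          refine le_trans (min_le_left _ _) (le_trans this (le_max_right _ _))
        · have : (j:ℝ) + 1 ≤ i := by exact_mod_cast h
          refine le_trans (min_le_right _ _) (le_trans this (le_max_left _ _))
    _ ≤ ∫⁻ t in Set.Ioi (0:ℝ), ENNReal.ofReal (G t) := by
        refine lintegral_mono' (Measure.restrict_mono ?_ le_rfl) le_rfl
        refine Set.iUnion_subset fun n t ht => lt_of_le_of_lt (Nat.cast_nonneg n) ht.1


lemma aux_pointwise (y : ℝ) (n : ℕ) (hn : 1 ≤ n) (b : ℝ) (hb : 0 < b) (hb2 : b ≤ 1/2)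
    (hVn : |y| ^ b ≤ n) : |y| / (n:ℝ) ^ (1/b) ≤ (min (|y| ^ b) n / n)^2 := by
  have hnpos : (0:ℝ) < n := by exact_mod_cast hn
  have hV0 : 0 ≤ |y| ^ b := Real.rpow_nonneg (abs_nonneg y) b
  rw [min_eq_left hVn]
  have h1 : |y| = (|y| ^ b) ^ (1/b) := by
    rw [← Real.rpow_mul (abs_nonneg y), mul_one_div_cancel hb.ne', Real.rpow_one]
  calc |y| / (n:ℝ) ^ (1/b) = (|y| ^ b / n) ^ (1/b) := by
        rw [Real.div_rpow hV0 hnpos.le, ← h1]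
    _ ≤ (|y| ^ b / n) ^ (2:ℝ) := by
        apply Real.rpow_le_rpow_of_exponent_ge' (by positivity)
          ((div_le_one hnpos).2 hVn) (by norm_num)
        rw [le_div_iff₀ hb]; linarith
    _ = (|y| ^ b / n) ^ 2 := by
        rw [← Real.rpow_natCast (|y| ^ b / n) 2]; norm_num

-- pointwise sum bound
lemma aux_claim (G : ℝ → ℝ) (hG0 : ∀ t, 0 ≤ t → 0 ≤ G t) (t : ℝ) (ht : 0 < t) :
    (ENNReal.ofReal (G t * (2 * t)) *
      ∑' n : ℕ, if t < (n : ℝ) then ENNReal.ofReal (((n : ℝ) ^ 2)⁻¹) else 0)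
      ≤ ENNReal.ofReal (4 * G t) := by
  have hGt := hG0 t ht.le
  rcases le_or_gt t 1 with h1 | h1
  · calc ENNReal.ofReal (G t * (2 * t)) * _
        ≤ ENNReal.ofReal (2 * G t) * ENNReal.ofReal (2 / (⌊t⌋₊ + 1)) := by
          refine mul_le_mul (ENNReal.ofReal_le_ofReal (by nlinarith)) (aux_tail_real t ht)
            zero_le zero_le
      _ ≤ ENNReal.ofReal (2 * G t) * ENNReal.ofReal 2 := by
          refine mul_le_mul_right (ENNReal.ofReal_le_ofReal ?_) _
          rw [div_le_iff₀ (by positivity)]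
          nlinarith [Nat.cast_nonneg (α := ℝ) ⌊t⌋₊]
      _ = ENNReal.ofReal (4 * G t) := by
          rw [← ENNReal.ofReal_mul (by positivity)]; ring_nf
  · calc ENNReal.ofReal (G t * (2 * t)) * _
        ≤ ENNReal.ofReal (G t * (2 * t)) * ENNReal.ofReal (2 / (⌊t⌋₊ + 1)) :=
          mul_le_mul_right (aux_tail_real t ht) _
      _ ≤ ENNReal.ofReal (G t * (2 * t)) * ENNReal.ofReal (2 / t) := by
          refine mul_le_mul_right (ENNReal.ofReal_le_ofReal ?_) _
          apply div_le_div_of_nonneg_left (by norm_num) ht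
          exact (Nat.lt_floor_add_one t).le
      _ = ENNReal.ofReal (4 * G t) := by
          rw [← ENNReal.ofReal_mul (by positivity)]
          congr 1
          field_simp
          ring

lemma aux_moment {Ω : Type*} [MeasureSpace Ω] [IsProbabilityMeasure (ℙ : Measure Ω)]
    (V : ℕ → Ω → ℝ) (hVm : ∀ n, Measurable (V n)) (hVnn : ∀ n ω, 0 ≤ V n ω)
    (G : ℝ → ℝ) (hG0 : ∀ t, 0 ≤ t → 0 ≤ G t) (hGint : IntegrableOn G (Set.Ioi 0))
    (hdom : ∀ n t, 0 ≤ t → (ℙ : Measure Ω) {ω | t < V n ω} ≤ ENNReal.ofReal (G t)) :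
    (∑' n : ℕ, ∫⁻ ω, ENNReal.ofReal ((min (V n ω) (n:ℝ) / (n:ℝ)) ^ 2) ∂(ℙ : Measure Ω)) < ∞ := by
  set W : ℕ → Ω → ℝ := fun n ω => min (V n ω) n with hW
  have hWm : ∀ n, Measurable (W n) := fun n => (hVm n).min measurable_const
  have hWnn : ∀ n ω, 0 ≤ W n ω := fun n ω => le_min (hVnn n ω) (Nat.cast_nonneg n)
  have hWle : ∀ n ω, W n ω ≤ n := fun n ω => min_le_right _ _
  -- layer cake
  have hlayer : ∀ n : ℕ, ∫⁻ ω, ENNReal.ofReal ((W n ω) ^ 2) ∂ℙ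
      = ∫⁻ t in Set.Ioi (0:ℝ), ℙ {ω | t < W n ω} * ENNReal.ofReal (2 * t) := by
    intro n
    have key := lintegral_comp_eq_lintegral_meas_lt_mul (ℙ : Measure Ω)
      (f := W n) (g := fun t => 2 * t) (ae_of_all _ (hWnn n)) (hWm n).aemeasurable
      (fun t _ => (continuous_const.mul continuous_id).intervalIntegrable 0 t)
      ((ae_restrict_iff' measurableSet_Ioi).2 (ae_of_all _ (fun t (ht : t ∈ Set.Ioi (0:ℝ)) => by simp at ht; positivity)))
    have heq : ∀ x : ℝ, ∫ t in (0:ℝ)..x, 2 * t = x ^ 2 := by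
      intro x
      rw [intervalIntegral.integral_const_mul, integral_id]
      ring
    simp_rw [heq] at key
    exact key
  -- scaling and bound, n ≥ 1 case handled uniformly via B
  set B : ℕ → ℝ → ℝ≥0∞ := fun n t =>
    (Set.Ioo (0:ℝ) (n:ℝ)).indicator (fun t => ENNReal.ofReal (G t * (2 * t))) t
      * ENNReal.ofReal (((n : ℝ) ^ 2)⁻¹) with hB
  have hFB : ∀ n : ℕ, (∫⁻ ω, ENNReal.ofReal ((W n ω / n) ^ 2) ∂ℙ)
      ≤ ∫⁻ t in Set.Ioi (0:ℝ), B n t := by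
    intro n
    rcases Nat.eq_zero_or_pos n with rfl | hn
    · simp
    have hnpos : (0:ℝ) < n := by exact_mod_cast hn
    have h1 : (∫⁻ ω, ENNReal.ofReal ((W n ω / n) ^ 2) ∂ℙ)
        = (∫⁻ ω, ENNReal.ofReal ((W n ω) ^ 2) ∂ℙ) * ENNReal.ofReal (((n : ℝ) ^ 2)⁻¹) := by
      rw [← lintegral_mul_const' _ _ (by simp)]
      congr 1 with ω
      rw [div_pow, division_def, ENNReal.ofReal_mul (by positivity)]
    rw [h1, hlayer n, ← lintegral_mul_const' _ _ (by simp)]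
    refine lintegral_mono_ae ((ae_restrict_iff' measurableSet_Ioi).2 (ae_of_all _ ?_))
    intro t ht
    rcases lt_or_ge t n with htn | htn
    · have : ℙ {ω | t < W n ω} ≤ ENNReal.ofReal (G t) :=
        le_trans (measure_mono (fun ω (h : t < W n ω) => lt_of_lt_of_le h (min_le_left _ _)))
          (hdom n t ht.le)
      calc ℙ {ω | t < W n ω} * ENNReal.ofReal (2 * t) * ENNReal.ofReal (((n : ℝ) ^ 2)⁻¹)
          ≤ ENNReal.ofReal (G t) * ENNReal.ofReal (2 * t) * ENNReal.ofReal (((n : ℝ) ^ 2)⁻¹) := by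
            gcongr
        _ = B n t := by
            rw [hB]
            simp only []
            rw [Set.indicator_of_mem (Set.mem_Ioo.2 ⟨ht, htn⟩)]
            rw [← ENNReal.ofReal_mul (hG0 t ht.le)]
    · have hempty : ℙ {ω | t < W n ω} = 0 := by
        convert measure_empty
        · ext ω
          simp only [Set.mem_setOf_eq, Set.mem_empty_iff_false, iff_false, not_lt]
          exact (hWle n ω).trans htn
        · infer_instance
      rw [hempty, zero_mul, zero_mul]
      exact zero_le
  -- sum and swap
  calc (∑' n : ℕ, ∫⁻ ω, ENNReal.ofReal ((W n ω / n) ^ 2) ∂ℙ)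
      ≤ ∑' n : ℕ, ∫⁻ t in Set.Ioi (0:ℝ), B n t := ENNReal.tsum_le_tsum hFB
    _ = ∫⁻ t in Set.Ioi (0:ℝ), ∑' n : ℕ, B n t := by
        rw [← lintegral_tsum]
        intro n
        refine AEMeasurable.mul_const ?_ _
        refine AEMeasurable.indicator ?_ measurableSet_Ioo
        have hGm : AEMeasurable G (volume.restrict (Set.Ioi (0:ℝ))) :=
          hGint.aemeasurable
        exact (hGm.mul (measurable_id.const_mul 2).aemeasurable).ennreal_ofReal
    _ ≤ ∫⁻ t in Set.Ioi (0:ℝ), ENNReal.ofReal (4 * G t) := by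
        refine lintegral_mono_ae ((ae_restrict_iff' measurableSet_Ioi).2 (ae_of_all _ ?_))
        intro t ht
        have : (∑' n : ℕ, B n t) = ENNReal.ofReal (G t * (2 * t)) *
            ∑' n : ℕ, if t < (n : ℝ) then ENNReal.ofReal (((n : ℝ) ^ 2)⁻¹) else 0 := by
          rw [← ENNReal.tsum_mul_left]
          congr 1 with n
          rw [hB]
          simp only [Set.indicator_apply, Set.mem_Ioo]
          by_cases h : t < (n:ℝ)
          · rw [if_pos ⟨ht, h⟩, if_pos h]
          · rw [if_neg (fun hh => h hh.2), if_neg h, zero_mul, mul_zero]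
        rw [this]
        exact aux_claim G hG0 t ht
    _ ≤ 4 * ∫⁻ t in Set.Ioi (0:ℝ), ENNReal.ofReal (G t) := by
        rw [← lintegral_const_mul' _ _ (by simp)]
        refine lintegral_mono fun t => ?_
        rw [ENNReal.ofReal_mul (by norm_num)]
        gcongr
        · simp [ENNReal.ofReal_ofNat]
    _ < ∞ := ENNReal.mul_lt_top (by simp) (aux_G_fin G hGint)


set_option maxHeartbeats 1000000 in
theorem lemma_Y_series {Ω : Type*} [MeasureSpace Ω]
    [IsProbabilityMeasure (ℙ : Measure Ω)]
    (Y : ℕ → Ω → ℝ) (hYm : ∀ n, Measurable (Y n))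
    (a : ℕ → ℝ) (ha : ∀ n, 0 < a n ∧ a n ≤ 1) (hanti : Antitone a)
    (ha0 : Tendsto a atTop (𝓝 0))
    (halog : Tendsto (fun n => a n * Real.log n) atTop atTop)
    (G : ℝ → ℝ) (hG0 : ∀ t, 0 ≤ t → 0 ≤ G t) (hGanti : AntitoneOn G (Set.Ici 0))
    (hGint : IntegrableOn G (Set.Ioi 0))
    (hdom : ∀ n t, 0 ≤ t → ℙ {ω | t < |Y n ω| ^ (a n)} ≤ ENNReal.ofReal (G t)) :
    ∀ᵐ ω ∂ℙ, Summable fun n : {n : ℕ // 1 ≤ n} =>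
      |Y n.1 ω| / (n.1 : ℝ) ^ (1 / a n.1) := by
  set V : ℕ → Ω → ℝ := fun n ω => |Y n ω| ^ (a n) with hVdef
  have hVm : ∀ n, Measurable (V n) := fun n => (Real.continuous_rpow_const (ha n).1.le).measurable.comp (hYm n).abs
  have hVnn : ∀ n ω, 0 ≤ V n ω := fun n ω => Real.rpow_nonneg (abs_nonneg _) _
  -- Borel-Cantelli part
  have hBC : (∑' n : ℕ, ℙ {ω | (n : ℝ) < V n ω}) ≠ ∞ := by
    have hb : ∀ n : ℕ, ℙ {ω | (n : ℝ) < V n ω} ≤ ENNReal.ofReal (G n) := fun n =>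
      hdom n n (Nat.cast_nonneg n)
    refine ne_top_of_le_ne_top ?_ (ENNReal.tsum_le_tsum hb)
    have hsplit : (∑' n : ℕ, ENNReal.ofReal (G n))
        = ENNReal.ofReal (G 0) + ∑' n : ℕ, ENNReal.ofReal (G ((n : ℝ) + 1)) := by
      rw [tsum_eq_zero_add' ENNReal.summable]
      push_cast
      rfl
    rw [hsplit]
    refine ENNReal.add_ne_top.2 ⟨ENNReal.ofReal_ne_top, ?_⟩
    exact ne_top_of_le_ne_top (aux_G_fin G hGint).ne (aux_G_sum G hGanti)
  have hae1 := ae_eventually_notMem (μ := (ℙ : Measure Ω))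
    (s := fun n : ℕ => {ω : Ω | (n : ℝ) < V n ω}) hBC
  -- second moment part
  have hmom := aux_moment V hVm hVnn G hG0 hGint
    (fun n t ht => hdom n t ht)
  have hmeas : ∀ n : ℕ, Measurable fun ω =>
      ENNReal.ofReal ((min (V n ω) (n:ℝ) / (n:ℝ)) ^ 2) := fun n =>
    ((((hVm n).min measurable_const).div_const _).pow_const 2).ennreal_ofReal
  have hae2 : ∀ᵐ ω ∂(ℙ : Measure Ω),
      (∑' n : ℕ, ENNReal.ofReal ((min (V n ω) (n:ℝ) / (n:ℝ)) ^ 2)) < ∞ := by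
    refine ae_lt_top' (Measurable.ennreal_tsum hmeas).aemeasurable ?_
    rw [lintegral_tsum (fun n => (hmeas n).aemeasurable)]
    exact hmom.ne
  -- small exponents
  have hsmall : ∀ᶠ n in atTop, a n ≤ 1 / 2 :=
    ha0.eventually (eventually_le_nhds (by norm_num))
  filter_upwards [hae1, hae2] with ω h1 h2
  -- real summability
  have hg : Summable fun n : ℕ => (min (V n ω) (n:ℝ) / (n:ℝ)) ^ 2 := by
    have := ENNReal.summable_toReal h2.ne
    simpa [ENNReal.toReal_ofReal (sq_nonneg _)] using this
  obtain ⟨N1, hN1⟩ := eventually_atTop.1 h1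
  obtain ⟨N2, hN2⟩ := eventually_atTop.1 hsmall
  set N := max (max N1 N2) 1 with hN
  have hmain : Summable fun n : ℕ => |Y n ω| / (n : ℝ) ^ (1 / a n) := by
    rw [← summable_nat_add_iff N]
    refine Summable.of_nonneg_of_le (fun n => ?_) (fun n => ?_)
      ((summable_nat_add_iff N).2 hg)
    · have : (0:ℝ) ≤ ((n + N : ℕ) : ℝ) ^ (1 / a (n + N)) :=
        Real.rpow_nonneg (Nat.cast_nonneg _) _
      exact div_nonneg (abs_nonneg _) this
    · have hn1 : 1 ≤ n + N := le_trans (le_max_right _ 1) (Nat.le_add_left N n)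
      have hVle : V (n + N) ω ≤ (n + N : ℕ) := by
        have := hN1 (n + N) (le_trans (le_trans (le_max_left N1 N2) (le_max_left _ 1))
          (Nat.le_add_left N n))
        simpa using this
      have hale : a (n + N) ≤ 1 / 2 :=
        hN2 (n + N) (le_trans (le_trans (le_max_right N1 N2) (le_max_left _ 1))
          (Nat.le_add_left N n))
      exact aux_pointwise (Y (n + N) ω) (n + N) hn1 (a (n + N)) (ha (n + N)).1 hale hVle
  exact hmain.subtype _
end

section
/- Under the same assumptions (a_n ∈ (0,1], a_n ↓ 0, a_n ln n → ∞, V_n := |Y_n|^{a_n} with tails dominated by a nonincreasing integrable Ḡ), one has (1/n^{1/a_n}) ∑_{k=1}^n Y_k → 0 almost surely. -/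
open MeasureTheory ProbabilityTheory Filter Topology Real
open scoped ENNReal NNReal
open Filter Topology

-- Abel summation identity specialized
lemma abel_ident (y b : ℕ → ℝ) (hb0 : ∀ n, 0 < b n) (M : ℕ) :
    ∀ n, M ≤ n →
      (∑ k ∈ Finset.Ioc M n, y k) =
        b n * (∑ k ∈ Finset.Ioc M n, y k / b k)
          - ∑ k ∈ Finset.Ico M n, (b (k+1) - b k) * (∑ j ∈ Finset.Ioc M k, y j / b j) := by
  intro n hn
  induction n, hn using Nat.le_induction with
  | base => simp
  | succ n hn ih =>
    rw [Finset.sum_Ioc_succ_top (by omega), Finset.sum_Ioc_succ_top (by omega),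
      Finset.sum_Ico_succ_top (by omega), ih]
    have : y (n+1) / b (n+1) * b (n+1) = y (n+1) := div_mul_cancel₀ _ (hb0 (n+1)).ne'
    ring_nf
    nlinarith [this, mul_inv_cancel_right₀ (hb0 (1+n)).ne' (y (1+n))]

lemma telescope_Ico (b : ℕ → ℝ) (M : ℕ) : ∀ n, M ≤ n →
    (∑ k ∈ Finset.Ico M n, (b (k+1) - b k)) = b n - b M := by
  intro n hn
  induction n, hn using Nat.le_induction with
  | base => simp
  | succ n hn ih => rw [Finset.sum_Ico_succ_top (by omega), ih]; ring

lemma sum_range_split (f : ℕ → ℝ) (M : ℕ) : ∀ n, M ≤ n →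
    (∑ k ∈ Finset.range (n+1), f k)
      = (∑ k ∈ Finset.range (M+1), f k) + ∑ k ∈ Finset.Ioc M n, f k := by
  intro n hn
  induction n, hn using Nat.le_induction with
  | base => simp
  | succ n hn ih =>
    rw [Finset.sum_range_succ, ih, Finset.sum_Ioc_succ_top (by omega)]; ring

lemma kronecker (b : ℕ → ℝ) (hb : Monotone b) (hb0 : ∀ n, 0 < b n)
    (hbtop : Tendsto b atTop atTop) (y : ℕ → ℝ)
    (hsum : Summable fun n => y n / b n) :
    Tendsto (fun n => (∑ k ∈ Finset.range (n+1), y k) / b n) atTop (𝓝 0) := by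
  rw [Metric.tendsto_atTop]
  intro ε hε
  -- partial sums of the series form a Cauchy sequence
  obtain ⟨L, hL⟩ := hsum
  have hps : Tendsto (fun n => ∑ k ∈ Finset.range n, y k / b k) atTop (𝓝 L) :=
    hL.tendsto_sum_nat
  rw [Metric.tendsto_atTop] at hps
  obtain ⟨M, hM⟩ := hps (ε/8) (by linarith)
  -- for n ≥ M, the tail partial sums are small
  have htail : ∀ n, M ≤ n → |∑ k ∈ Finset.Ioc M n, y k / b k| ≤ ε/4 := by
    intro n hn
    have h1 := hM (n+1) (by omega)
    have h2 := hM (M+1) (by omega)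
    have e1 : (∑ k ∈ Finset.Ioc M n, y k / b k)
        = (∑ k ∈ Finset.range (n+1), y k / b k) - (∑ k ∈ Finset.range (M+1), y k / b k) := by
      rw [sum_range_split (fun k => y k / b k) M n hn]; ring
    rw [e1]
    rw [Real.dist_eq] at h1 h2
    have := abs_sub_abs_le_abs_sub (∑ k ∈ Finset.range (n+1), y k / b k - L)
      (∑ k ∈ Finset.range (M+1), y k / b k - L)
    calc |(∑ k ∈ Finset.range (n+1), y k / b k) - (∑ k ∈ Finset.range (M+1), y k / b k)|
        = |((∑ k ∈ Finset.range (n+1), y k / b k) - L) - ((∑ k ∈ Finset.range (M+1), y k / b k) - L)| := by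
          rw [sub_sub_sub_cancel_right]
      _ ≤ |(∑ k ∈ Finset.range (n+1), y k / b k) - L| + |(∑ k ∈ Finset.range (M+1), y k / b k) - L| := abs_sub _ _
      _ ≤ ε/8 + ε/8 := add_le_add h1.le h2.le
      _ = ε/4 := by ring
  -- bound on the partial sums of y beyond M
  have hbd : ∀ n, M ≤ n → |∑ k ∈ Finset.Ioc M n, y k| ≤ ε/2 * b n := by
    intro n hn
    rw [abel_ident y b hb0 M n hn]
    have hinner : |∑ k ∈ Finset.Ico M n, (b (k+1) - b k) * (∑ j ∈ Finset.Ioc M k, y j / b j)|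
        ≤ ε/4 * (b n - b M) := by
      calc |∑ k ∈ Finset.Ico M n, (b (k+1) - b k) * (∑ j ∈ Finset.Ioc M k, y j / b j)|
          ≤ ∑ k ∈ Finset.Ico M n, |(b (k+1) - b k) * (∑ j ∈ Finset.Ioc M k, y j / b j)| :=
            Finset.abs_sum_le_sum_abs _ _
        _ ≤ ∑ k ∈ Finset.Ico M n, (b (k+1) - b k) * (ε/4) := by
            apply Finset.sum_le_sum
            intro k hk
            rw [abs_mul, abs_of_nonneg (sub_nonneg.mpr (hb (Nat.le_succ k)))]
            have hkM : M ≤ k := (Finset.mem_Ico.mp hk).1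
            exact mul_le_mul_of_nonneg_left (htail k hkM) (sub_nonneg.mpr (hb (Nat.le_succ k)))
        _ = (b n - b M) * (ε/4) := by rw [← Finset.sum_mul, telescope_Ico b M n hn]
        _ ≤ ε/4 * (b n - b M) := by ring_nf; exact le_refl _
    have houter : |b n * (∑ k ∈ Finset.Ioc M n, y k / b k)| ≤ b n * (ε/4) := by
      rw [abs_mul, abs_of_pos (hb0 n)]
      exact mul_le_mul_of_nonneg_left (htail n hn) (hb0 n).le
    have hbMn : b M ≤ b n := hb hn
    calc |b n * (∑ k ∈ Finset.Ioc M n, y k / b k)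
          - ∑ k ∈ Finset.Ico M n, (b (k+1) - b k) * (∑ j ∈ Finset.Ioc M k, y j / b j)|
        ≤ |b n * (∑ k ∈ Finset.Ioc M n, y k / b k)|
          + |∑ k ∈ Finset.Ico M n, (b (k+1) - b k) * (∑ j ∈ Finset.Ioc M k, y j / b j)| := abs_sub _ _
      _ ≤ b n * (ε/4) + ε/4 * (b n - b M) := add_le_add houter hinner
      _ ≤ ε/2 * b n := by nlinarith [(hb0 M)]
  -- now choose N ≥ M with |S_M| / b n small
  have hSfix : Tendsto (fun n => |∑ k ∈ Finset.range (M+1), y k| / b n) atTop (𝓝 0) := by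
    apply Tendsto.div_atTop tendsto_const_nhds hbtop
  rw [Metric.tendsto_atTop] at hSfix
  obtain ⟨N₀, hN₀⟩ := hSfix (ε/4) (by linarith)
  refine ⟨max M N₀, fun n hn => ?_⟩
  have hnM : M ≤ n := le_trans (le_max_left _ _) hn
  have hnN : N₀ ≤ n := le_trans (le_max_right _ _) hn
  have hsplit : (∑ k ∈ Finset.range (n+1), y k)
      = (∑ k ∈ Finset.range (M+1), y k) + ∑ k ∈ Finset.Ioc M n, y k :=
    sum_range_split y M n hnM
  rw [Real.dist_eq, sub_zero, hsplit]
  have h1 := hN₀ n hnN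
  rw [Real.dist_eq, sub_zero, abs_of_nonneg (div_nonneg (abs_nonneg _) (hb0 n).le)] at h1
  have h2 := hbd n hnM
  have hbn := hb0 n
  rw [abs_div, abs_of_pos hbn, div_lt_iff₀ hbn]
  rw [div_lt_iff₀ hbn] at h1
  calc |(∑ k ∈ Finset.range (M+1), y k) + ∑ k ∈ Finset.Ioc M n, y k|
      ≤ |∑ k ∈ Finset.range (M+1), y k| + |∑ k ∈ Finset.Ioc M n, y k| := abs_add_le _ _
    _ < ε/4 * b n + ε/2 * b n := by linarith
    _ ≤ ε * b n := by nlinarith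
open MeasureTheory Filter Topology Real

lemma tsum_ofReal_G_le (G : ℝ → ℝ) (hGanti : AntitoneOn G (Set.Ici 0)) {c : ℝ} (hc : 0 < c) :
    (∑' n : ℕ, ENNReal.ofReal (G (((n : ℝ)+1) * c))) ≤
      ENNReal.ofReal c⁻¹ * ∫⁻ t in Set.Ioi (0:ℝ), ENNReal.ofReal (G t) := by
  set J := ∫⁻ t in Set.Ioi (0:ℝ), ENNReal.ofReal (G t) with hJ
  have key : ∀ n : ℕ, ENNReal.ofReal (G (((n:ℝ)+1) * c)) * ENNReal.ofReal c
      ≤ ∫⁻ t in Set.Ioc ((n:ℝ)*c) (((n:ℝ)+1)*c), ENNReal.ofReal (G t) := by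
    intro n
    have hvol : (volume : Measure ℝ) (Set.Ioc ((n:ℝ)*c) (((n:ℝ)+1)*c)) = ENNReal.ofReal c := by
      rw [Real.volume_Ioc]; congr 1; ring
    have h1 : ∫⁻ _ in Set.Ioc ((n:ℝ)*c) (((n:ℝ)+1)*c),
        ENNReal.ofReal (G (((n:ℝ)+1)*c)) = ENNReal.ofReal (G (((n:ℝ)+1)*c)) * ENNReal.ofReal c := by
      rw [setLIntegral_const, hvol]
    rw [← h1]
    refine setLIntegral_mono_ae' measurableSet_Ioc (Filter.Eventually.of_forall ?_)
    intro t ht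
    refine ENNReal.ofReal_le_ofReal (hGanti ?_ ?_ ht.2)
    · have h0 : (0:ℝ) ≤ (n:ℝ)*c := by positivity
      exact Set.mem_Ici.mpr (le_trans h0 ht.1.le)
    · exact Set.mem_Ici.mpr (by positivity)
  have disj : Pairwise (Function.onFun Disjoint
      (fun n : ℕ => Set.Ioc ((n:ℝ)*c) (((n:ℝ)+1)*c))) := by
    intro m n hmn
    apply Set.Ioc_disjoint_Ioc.mpr
    rcases lt_or_gt_of_ne hmn with h | h
    · have : ((m:ℝ)+1) ≤ (n:ℝ) := by exact_mod_cast h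
      refine le_trans (min_le_left _ _) (le_trans ?_ (le_max_right _ _))
      nlinarith
    · have : ((n:ℝ)+1) ≤ (m:ℝ) := by exact_mod_cast h
      refine le_trans (min_le_right _ _) (le_trans ?_ (le_max_left _ _))
      nlinarith
  have husub : (⋃ n : ℕ, Set.Ioc ((n:ℝ)*c) (((n:ℝ)+1)*c)) ⊆ Set.Ioi 0 := by
    intro t ht
    simp only [Set.mem_iUnion] at ht
    obtain ⟨n, hn⟩ := ht
    exact lt_of_le_of_lt (by positivity) hn.1
  have hmain : (∑' n : ℕ, ENNReal.ofReal (G (((n:ℝ)+1) * c))) * ENNReal.ofReal c ≤ J := by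
    calc (∑' n : ℕ, ENNReal.ofReal (G (((n:ℝ)+1) * c))) * ENNReal.ofReal c
        = ∑' n : ℕ, ENNReal.ofReal (G (((n:ℝ)+1) * c)) * ENNReal.ofReal c :=
          ENNReal.tsum_mul_right.symm
      _ ≤ ∑' n : ℕ, ∫⁻ t in Set.Ioc ((n:ℝ)*c) (((n:ℝ)+1)*c), ENNReal.ofReal (G t) :=
          ENNReal.tsum_le_tsum key
      _ = ∫⁻ t in ⋃ n : ℕ, Set.Ioc ((n:ℝ)*c) (((n:ℝ)+1)*c), ENNReal.ofReal (G t) :=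
          (lintegral_iUnion (fun _ => measurableSet_Ioc) disj _).symm
      _ ≤ J := lintegral_mono_set husub
  have hc0 : ENNReal.ofReal c ≠ 0 := by
    simp [ENNReal.ofReal_eq_zero, not_le, hc]
  have hfin := (ENNReal.le_div_iff_mul_le (Or.inl hc0) (Or.inl ENNReal.ofReal_ne_top)).mpr hmain
  rw [ENNReal.ofReal_inv_of_pos hc, mul_comm]
  rwa [div_eq_mul_inv] at hfin

set_option maxHeartbeats 1000000 in
theorem lemma_Y_normalized_sums {Ω : Type*} [MeasureSpace Ω]
    [IsProbabilityMeasure (ℙ : Measure Ω)]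
    (Y : ℕ → Ω → ℝ) (hYm : ∀ n, Measurable (Y n))
    (a : ℕ → ℝ) (ha : ∀ n, 0 < a n ∧ a n ≤ 1) (hanti : Antitone a)
    (ha0 : Tendsto a atTop (𝓝 0))
    (halog : Tendsto (fun n => a n * Real.log n) atTop atTop)
    (G : ℝ → ℝ) (hG0 : ∀ t, 0 ≤ t → 0 ≤ G t) (hGanti : AntitoneOn G (Set.Ici 0))
    (hGint : IntegrableOn G (Set.Ioi 0))
    (hdom : ∀ n t, 0 ≤ t → ℙ {ω | t < |Y n ω| ^ (a n)} ≤ ENNReal.ofReal (G t)) :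
    ∀ᵐ ω ∂ℙ, Tendsto (fun n => (∑ k ∈ Finset.Icc 1 n, Y k ω) / (n : ℝ) ^ (1 / a n))
      atTop (𝓝 0) := by
  -- choose N with a n ≤ 1/2 beyond N, N ≥ 1
  obtain ⟨N₁, hN₁⟩ : ∃ N₁, ∀ n ≥ N₁, a n ≤ 1/2 := by
    have h := ha0.eventually (eventually_le_nhds (show (0:ℝ) < 1/2 by norm_num))
    exact eventually_atTop.mp h
  set N := max N₁ 1 with hNdef
  have hN1 : 1 ≤ N := le_max_right _ _
  set b : ℕ → ℝ := fun n => (n:ℝ) ^ (1 / a n) with hbdef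
  have hbpos : ∀ n, 1 ≤ n → 0 < b n := by
    intro n hn
    exact Real.rpow_pos_of_pos (by exact_mod_cast hn) _
  have hbnonneg : ∀ n, 0 ≤ b n := fun n => Real.rpow_nonneg (Nat.cast_nonneg n) _
  set g : ℕ → Ω → ℝ := fun n ω => min (|Y n ω| / b n) 1 with hgdef
  have hgnonneg : ∀ n ω, 0 ≤ g n ω := fun n ω =>
    le_min (div_nonneg (abs_nonneg _) (hbnonneg n)) zero_le_one
  have hVm : ∀ n, Measurable fun ω => |Y n ω| ^ (a n) := fun n =>
    (Real.continuous_rpow_const (ha n).1.le).measurable.comp (hYm n).abs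
  have hgm : ∀ n, Measurable fun ω => ENNReal.ofReal (g n ω) := fun n =>
    ENNReal.measurable_ofReal.comp (((hYm n).abs.div_const _).min measurable_const)
  set A : ℕ → ℕ → Set Ω := fun n j => {ω | (n:ℝ) * Real.exp (-((j:ℝ)+1)) < |Y n ω| ^ (a n)}
    with hAdef
  have hAm : ∀ n j, MeasurableSet (A n j) := fun n j => measurableSet_lt measurable_const (hVm n)
  -- pointwise domination by a sum of indicators
  have hpt : ∀ n, N ≤ n → ∀ ω, ENNReal.ofReal (g n ω)
      ≤ ∑' j : ℕ, (A n j).indicator (fun _ => ENNReal.ofReal (Real.exp (-(j:ℝ) / a n))) ω := by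
    intro n hn ω
    have hn1 : 1 ≤ n := le_trans hN1 hn
    have han : 0 < a n := (ha n).1
    have hbn : 0 < b n := hbpos n hn1
    set X := |Y n ω| / b n with hXdef
    have hX0 : 0 ≤ X := div_nonneg (abs_nonneg _) hbn.le
    have hbridge : ∀ j : ℕ, ω ∈ A n j ↔ Real.exp (-((j:ℝ)+1)/a n) < X := by
      intro j
      have hkey : (Real.exp (-((j:ℝ)+1)/a n) * b n) ^ (a n)
          = (n:ℝ) * Real.exp (-((j:ℝ)+1)) := by
        rw [Real.mul_rpow (Real.exp_pos _).le hbn.le]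
        have e1 : (Real.exp (-((j:ℝ)+1)/a n)) ^ (a n) = Real.exp (-((j:ℝ)+1)) := by
          rw [Real.rpow_def_of_pos (Real.exp_pos _), Real.log_exp, div_mul_cancel₀ _ han.ne']
        have e2 : (b n) ^ (a n) = (n:ℝ) := by
          show ((n:ℝ) ^ (1 / a n)) ^ (a n) = (n:ℝ)
          rw [← Real.rpow_mul (Nat.cast_nonneg n), one_div, inv_mul_cancel₀ han.ne',
            Real.rpow_one]
        rw [e1, e2]; ring
      constructor
      · intro hA
        have h2 : (Real.exp (-((j:ℝ)+1)/a n) * b n) ^ (a n) < |Y n ω| ^ (a n) := by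
          rw [hkey]; exact hA
        have h3 := (Real.rpow_lt_rpow_iff (by positivity) (abs_nonneg _) han).mp h2
        rw [hXdef, lt_div_iff₀ hbn]
        exact h3
      · intro hX
        have h3 : Real.exp (-((j:ℝ)+1)/a n) * b n < |Y n ω| := by
          rw [hXdef, lt_div_iff₀ hbn] at hX
          exact hX
        have h2 := (Real.rpow_lt_rpow_iff (by positivity) (abs_nonneg _) han).mpr h3
        rw [hkey] at h2
        exact h2
    rcases le_or_gt 1 X with hX1 | hX1
    · refine le_trans ?_ (ENNReal.le_tsum 0)
      have hmem : ω ∈ A n 0 := by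
        refine (hbridge 0).mpr (lt_of_lt_of_le ?_ hX1)
        rw [Real.exp_lt_one_iff]
        exact div_neg_of_neg_of_pos (by norm_num) han
      rw [Set.indicator_of_mem hmem]
      refine ENNReal.ofReal_le_ofReal ?_
      have : -((0:ℕ):ℝ) / a n = 0 := by norm_num
      rw [this, Real.exp_zero]
      exact min_le_right _ _
    · rcases eq_or_lt_of_le hX0 with h0 | hXpos
      · have : g n ω = 0 := by
          rw [hgdef]
          simp only []
          rw [← hXdef, ← h0]
          simp
        rw [this]
        simp
      · set j := ⌊-(a n) * Real.log X⌋₊ with hjdef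
        have hlogX : Real.log X < 0 := Real.log_neg hXpos hX1
        have harg : 0 ≤ -(a n) * Real.log X := by nlinarith
        have hfl : (j:ℝ) ≤ -(a n) * Real.log X := Nat.floor_le harg
        have hfl2 : -(a n) * Real.log X < (j:ℝ) + 1 := Nat.lt_floor_add_one _
        refine le_trans ?_ (ENNReal.le_tsum j)
        have hmem : ω ∈ A n j := by
          refine (hbridge j).mpr ?_
          rw [← Real.exp_log hXpos]
          refine Real.exp_lt_exp.mpr ?_
          rw [div_lt_iff₀ han]
          nlinarith
        rw [Set.indicator_of_mem hmem]
        refine ENNReal.ofReal_le_ofReal ?_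
        have hgX : g n ω = X := min_eq_left hX1.le
        rw [hgX, ← Real.exp_log hXpos]
        refine Real.exp_le_exp.mpr ?_
        rw [le_div_iff₀ han]
        nlinarith
  -- integral bound for n ≥ N
  have hint : ∀ n, N ≤ n → ∫⁻ ω, ENNReal.ofReal (g n ω) ∂ℙ
      ≤ ∑' j : ℕ, ENNReal.ofReal (Real.exp (-(2*(j:ℝ))))
          * ENNReal.ofReal (G ((n:ℝ) * Real.exp (-((j:ℝ)+1)))) := by
    intro n hn
    have hle := lintegral_mono (μ := (ℙ : Measure Ω)) (hpt n hn)
    rw [lintegral_tsum (fun j => (measurable_const.indicator (hAm n j)).aemeasurable)] at hle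
    refine hle.trans (ENNReal.tsum_le_tsum fun j => ?_)
    rw [lintegral_indicator_const (hAm n j)]
    have h1 : ℙ (A n j) ≤ ENNReal.ofReal (G ((n:ℝ)*Real.exp (-((j:ℝ)+1)))) :=
      hdom n _ (by positivity)
    have h2 : ENNReal.ofReal (Real.exp (-(j:ℝ)/a n))
        ≤ ENNReal.ofReal (Real.exp (-(2*(j:ℝ)))) := by
      refine ENNReal.ofReal_le_ofReal (Real.exp_le_exp.mpr ?_)
      have han : 0 < a n := (ha n).1
      have ha2 : a n ≤ 1/2 := hN₁ n (le_trans (le_max_left _ _) hn)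
      rw [neg_div, neg_le_neg_iff, le_div_iff₀ han]
      have : (0:ℝ) ≤ (j:ℝ) := Nat.cast_nonneg j
      nlinarith
    exact mul_le_mul' h2 h1
  -- finiteness of the relevant integral
  set J := ∫⁻ t in Set.Ioi (0:ℝ), ENNReal.ofReal (G t) with hJdef
  have hJfin : J ≠ ⊤ := by
    have hle : J ≤ ∫⁻ t in Set.Ioi (0:ℝ), (‖G t‖₊ : ℝ≥0∞) := by
      refine lintegral_mono fun t => ?_
      rw [← enorm_eq_nnnorm, Real.enorm_eq_ofReal_abs]
      exact ENNReal.ofReal_le_ofReal (le_abs_self _)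
    exact ne_top_of_le_ne_top hGint.2.ne hle
  have htot : (∑' m : ℕ, ∫⁻ ω, ENNReal.ofReal (g (m + N) ω) ∂ℙ) < ⊤ := by
    have hb1 : ∀ m : ℕ, ∫⁻ ω, ENNReal.ofReal (g (m + N) ω) ∂ℙ
        ≤ ∑' j : ℕ, ENNReal.ofReal (Real.exp (-(2*(j:ℝ))))
            * ENNReal.ofReal (G (((m + N : ℕ):ℝ) * Real.exp (-((j:ℝ)+1)))) :=
      fun m => hint (m + N) (by omega)
    have hstep : ∀ m j : ℕ,
        ENNReal.ofReal (G (((m + N : ℕ):ℝ) * Real.exp (-((j:ℝ)+1))))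
          ≤ ENNReal.ofReal (G (((m:ℝ)+1) * Real.exp (-((j:ℝ)+1)))) := by
      intro m j
      refine ENNReal.ofReal_le_ofReal ?_
      refine hGanti (Set.mem_Ici.mpr (by positivity)) (Set.mem_Ici.mpr (by positivity)) ?_
      refine mul_le_mul_of_nonneg_right ?_ (Real.exp_pos _).le
      have : (1:ℝ) ≤ (N:ℝ) := by exact_mod_cast hN1
      push_cast
      linarith
    calc (∑' m : ℕ, ∫⁻ ω, ENNReal.ofReal (g (m + N) ω) ∂ℙ)
        ≤ ∑' m : ℕ, ∑' j : ℕ, ENNReal.ofReal (Real.exp (-(2*(j:ℝ))))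
            * ENNReal.ofReal (G (((m + N : ℕ):ℝ) * Real.exp (-((j:ℝ)+1)))) :=
          ENNReal.tsum_le_tsum hb1
      _ = ∑' j : ℕ, ∑' m : ℕ, ENNReal.ofReal (Real.exp (-(2*(j:ℝ))))
            * ENNReal.ofReal (G (((m + N : ℕ):ℝ) * Real.exp (-((j:ℝ)+1)))) :=
          ENNReal.tsum_comm
      _ ≤ ∑' j : ℕ, ENNReal.ofReal (Real.exp (-(2*(j:ℝ))))
            * (ENNReal.ofReal ((Real.exp (-((j:ℝ)+1)))⁻¹) * J) := by
          refine ENNReal.tsum_le_tsum fun j => ?_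
          rw [ENNReal.tsum_mul_left]
          refine mul_le_mul_right ?_ _
          calc (∑' m : ℕ, ENNReal.ofReal (G (((m + N : ℕ):ℝ) * Real.exp (-((j:ℝ)+1)))))
              ≤ ∑' m : ℕ, ENNReal.ofReal (G (((m:ℝ)+1) * Real.exp (-((j:ℝ)+1)))) :=
                ENNReal.tsum_le_tsum fun m => hstep m j
            _ ≤ ENNReal.ofReal ((Real.exp (-((j:ℝ)+1)))⁻¹) * J :=
                tsum_ofReal_G_le G hGanti (Real.exp_pos _)
      _ = (∑' j : ℕ, ENNReal.ofReal (Real.exp (1-(j:ℝ)))) * J := by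
          rw [← ENNReal.tsum_mul_right]
          congr 1
          funext j
          rw [← mul_assoc]
          congr 1
          have hinv : (Real.exp (-((j:ℝ)+1)))⁻¹ = Real.exp ((j:ℝ)+1) := by
            rw [← Real.exp_neg]; congr 1; ring
          rw [hinv, ← ENNReal.ofReal_mul (Real.exp_pos _).le, ← Real.exp_add]
          congr 1
          ring
      _ < ⊤ := by
          have hsumm : Summable fun j : ℕ => Real.exp (1-(j:ℝ)) := by
            have hgeo : Summable fun j : ℕ => Real.exp 1 * (Real.exp (-1)) ^ j :=
              (summable_geometric_of_lt_one (Real.exp_pos _).le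
                (by rw [Real.exp_lt_one_iff]; norm_num)).mul_left _
            refine hgeo.congr fun j => ?_
            rw [← Real.exp_nat_mul, ← Real.exp_add]
            congr 1
            ring
          rw [← ENNReal.ofReal_tsum_of_nonneg (fun j => (Real.exp_pos _).le) hsumm]
          exact ENNReal.mul_lt_top ENNReal.ofReal_lt_top hJfin.lt_top
  have hswap : ∫⁻ ω, (∑' m : ℕ, ENNReal.ofReal (g (m + N) ω)) ∂ℙ < ⊤ := by
    rw [lintegral_tsum (fun m => (hgm (m + N)).aemeasurable)]
    exact htot
  have hae : ∀ᵐ ω ∂ℙ, (∑' m : ℕ, ENNReal.ofReal (g (m + N) ω)) < ⊤ :=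
    ae_lt_top (Measurable.ennreal_tsum fun m => hgm (m + N)) hswap.ne
  filter_upwards [hae] with ω hω
  -- summability of g (· + N)
  have h1 : Summable fun m => g (m + N) ω := by
    have h1' : Summable fun m => Real.toNNReal (g (m + N) ω) := by
      refine ENNReal.tsum_coe_ne_top_iff_summable.mp ?_
      have : ∀ m : ℕ, ((Real.toNNReal (g (m + N) ω) : ℝ≥0) : ℝ≥0∞)
          = ENNReal.ofReal (g (m + N) ω) := fun m => rfl
      rw [tsum_congr this]
      exact hω.ne
    have h1'' := NNReal.summable_coe.mpr h1'
    refine h1''.congr fun m => ?_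
    exact Real.coe_toNNReal _ (hgnonneg _ _)
  have h2 : Summable fun n => g n ω := (summable_nat_add_iff N).mp h1
  have h3 : Tendsto (fun n => g n ω) atTop (𝓝 0) := h2.tendsto_atTop_zero
  have h4 : ∀ᶠ n in atTop, g n ω = |Y n ω| / b n := by
    filter_upwards [h3.eventually (eventually_lt_nhds zero_lt_one)] with n hn
    rcases le_or_gt (|Y n ω| / b n) 1 with h | h
    · exact min_eq_left h
    · exfalso
      have : g n ω = 1 := min_eq_right h.le
      rw [this] at hn
      exact lt_irrefl _ hn
  obtain ⟨K, hK⟩ := eventually_atTop.mp h4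
  have h5 : Summable fun n => |Y n ω| / b n := by
    refine (summable_nat_add_iff K).mp ?_
    refine ((summable_nat_add_iff K).mpr h2).congr fun m => ?_
    exact hK (m + K) (by omega)
  have h6 : Summable fun n => Y n ω / b n := by
    have habs : ∀ n, |Y n ω| / b n = |Y n ω / b n| := fun n => by
      rw [abs_div, abs_of_nonneg (hbnonneg n)]
    exact Summable.of_abs (h5.congr habs)
  have h7 : Summable fun k => Y (k+1) ω / b (k+1) := (summable_nat_add_iff 1).mpr h6
  -- Kronecker's lemma
  have hmono : Monotone fun k => b (k+1) := by
    intro k l hkl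
    have hk1 : (0:ℝ) < ((k+1:ℕ):ℝ) := by positivity
    have hl1 : (0:ℝ) < ((l+1:ℕ):ℝ) := by positivity
    rw [hbdef]
    simp only []
    rw [Real.rpow_def_of_pos hk1, Real.rpow_def_of_pos hl1]
    refine Real.exp_le_exp.mpr ?_
    have hlog1 : Real.log ((k+1:ℕ):ℝ) ≤ Real.log ((l+1:ℕ):ℝ) :=
      Real.log_le_log hk1 (by exact_mod_cast Nat.succ_le_succ hkl)
    have hlog0 : 0 ≤ Real.log ((l+1:ℕ):ℝ) :=
      Real.log_nonneg (by exact_mod_cast Nat.succ_le_succ (Nat.zero_le l))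
    have hd : 1 / a (k+1) ≤ 1 / a (l+1) :=
      one_div_le_one_div_of_le (ha (l+1)).1 (hanti (Nat.succ_le_succ hkl))
    have hd0 : 0 ≤ 1 / a (k+1) := le_of_lt (by rw [one_div, inv_pos]; exact (ha (k+1)).1)
    exact mul_le_mul hlog1 hd hd0 hlog0
  have hbpos' : ∀ k : ℕ, 0 < b (k+1) := fun k => hbpos (k+1) (by omega)
  have hbtop : Tendsto (fun k => b (k+1)) atTop atTop := by
    have hbase : Tendsto (fun k : ℕ => ((k:ℝ)+1)) atTop atTop :=
      tendsto_atTop_add_const_right _ 1 tendsto_natCast_atTop_atTop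
    refine tendsto_atTop_mono (fun k => ?_) hbase
    have hk1 : (1:ℝ) ≤ ((k+1:ℕ):ℝ) := by exact_mod_cast Nat.succ_le_succ (Nat.zero_le k)
    have hd1 : (1:ℝ) ≤ 1 / a (k+1) := by
      rw [le_div_iff₀ (ha (k+1)).1]; simpa using (ha (k+1)).2
    have hle := Real.rpow_le_rpow_of_exponent_le hk1 hd1
    rw [Real.rpow_one] at hle
    calc ((k:ℝ)+1) = ((k+1:ℕ):ℝ) := by push_cast; ring
      _ ≤ b (k+1) := hle
  have hkron := kronecker (fun k => b (k+1)) hmono hbpos' hbtop (fun k => Y (k+1) ω) h7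
  refine (tendsto_add_atTop_iff_nat 1).mp ?_
  refine hkron.congr fun n => ?_
  have hsum : ∑ k ∈ Finset.Icc 1 (n+1), Y k ω = ∑ k ∈ Finset.range (n+1), Y (k+1) ω := by
    rw [← Finset.Ico_add_one_right_eq_Icc, Finset.sum_Ico_eq_sum_range]
    norm_num [add_comm]
  show (∑ k ∈ Finset.range (n+1), Y (k+1) ω) / b (n+1)
      = (∑ k ∈ Finset.Icc 1 (n+1), Y k ω) / ((n+1:ℕ):ℝ) ^ (1 / a (n+1))
  rw [hsum]
end
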